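/- A multivalued function F : X ⊸ Y between digital images is connectivity preserving if and only if F has weak continuity and F(x) is connected for every x ∈ X. -/

import Mathlib

/-- A subset `A` is connected under adjacency `adj`: any two of its points are
joined by a path of consecutively adjacent points lying in `A`. -/
def ConnIn {X : Type*} (adj : X → X → Prop) (A : Set X) : Prop :=
  ∀ a ∈ A, ∀ b ∈ A,
    Relation.ReflTransGen (fun u v => adj u v ∧ u ∈ A ∧ v ∈ A) a b

/-- Two subsets are adjacent if they contain points that are equal or adjacent. -/
def AdjSets {X : Type*} (adj : X → X → Prop) (A B : Set X) : Prop :=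
  ∃ a ∈ A, ∃ b ∈ B, a = b ∨ adj a b

/-- Image of a set under a multivalued function. -/
def imageMV {X Y : Type*} (F : X → Set Y) (A : Set X) : Set Y :=
  ⋃ x ∈ A, F x

/-- A multivalued function is connectivity preserving if images of connected
sets are connected. -/
def ConnPres {X Y : Type*} (adjX : X → X → Prop) (adjY : Y → Y → Prop)
    (F : X → Set Y) : Prop :=
  ∀ A : Set X, ConnIn adjX A → ConnIn adjY (imageMV F A)

/-- `F` has weak continuity: images of adjacent points are adjacent sets. -/
def WeakCont {X Y : Type*} (adjX : X → X → Prop) (adjY : Y → Y → Prop)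
    (F : X → Set Y) : Prop :=
  ∀ x x', adjX x x' → AdjSets adjY (F x) (F x')

theorem connectivity_preserving_iff_weak {X Y : Type*}
    (adjX : X → X → Prop) (adjY : Y → Y → Prop)
    (hsymX : ∀ a b, adjX a b → adjX b a) (hirrX : ∀ a, ¬ adjX a a)
    (hsymY : ∀ a b, adjY a b → adjY b a) (hirrY : ∀ a, ¬ adjY a a)
    (F : X → Set Y) (hne : ∀ x, (F x).Nonempty) :
    ConnPres adjX adjY F ↔
      (WeakCont adjX adjY F ∧ ∀ x, ConnIn adjY (F x)) := by
  constructor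
  · intro h
    constructor
    · intro x x' hxx'
      have hA : ConnIn adjX {x, x'} := by
        intro a ha b hb
        have s1 : Relation.ReflTransGen
            (fun u v => adjX u v ∧ u ∈ ({x, x'} : Set X) ∧ v ∈ ({x, x'} : Set X)) x x' :=
          Relation.ReflTransGen.single ⟨hxx', by simp, by simp⟩
        have s2 : Relation.ReflTransGen
            (fun u v => adjX u v ∧ u ∈ ({x, x'} : Set X) ∧ v ∈ ({x, x'} : Set X)) x' x :=
          Relation.ReflTransGen.single ⟨hsymX _ _ hxx', by simp, by simp⟩
        rcases ha with rfl | rfl <;> rcases hb with rfl | rfl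
        · exact Relation.ReflTransGen.refl
        · exact s1
        · exact s2
        · exact Relation.ReflTransGen.refl
      have himg := h _ hA
      obtain ⟨a, ha⟩ := hne x
      obtain ⟨b, hb⟩ := hne x'
      have haI : a ∈ imageMV F {x, x'} := by
        simp only [imageMV, Set.mem_iUnion]; exact ⟨x, by simp, ha⟩
      have hbI : b ∈ imageMV F {x, x'} := by
        simp only [imageMV, Set.mem_iUnion]; exact ⟨x', by simp, hb⟩
      have path := himg a haI b hbI
      have key : ∀ c, Relation.ReflTransGen
          (fun u v => adjY u v ∧ u ∈ imageMV F {x, x'} ∧ v ∈ imageMV F {x, x'}) a c →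
          c ∈ F x' → AdjSets adjY (F x) (F x') := by
        intro c hc
        induction hc with
        | refl => intro hmem; exact ⟨a, ha, a, hmem, Or.inl rfl⟩
        | @tail u v hp hstep ih =>
          intro hmem
          obtain ⟨hadj, hu, _⟩ := hstep
          have : ∃ z ∈ ({x, x'} : Set X), u ∈ F z := by
            simpa only [imageMV, Set.mem_iUnion, exists_prop] using hu
          obtain ⟨z, hz, hzF⟩ := this
          rcases hz with rfl | rfl
          · exact ⟨_, hzF, _, hmem, Or.inr hadj⟩
          · exact ih hzF
      exact key b path hb
    · intro x
      have hA : ConnIn adjX {x} := by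
        intro a ha b hb
        rcases ha with rfl; rcases hb with rfl
        exact Relation.ReflTransGen.refl
      have himg := h _ hA
      have heq : imageMV F {x} = F x := by
        ext y; simp [imageMV]
      rwa [heq] at himg
  · rintro ⟨hw, hc⟩ A hA a ha b hb
    have ha' : ∃ x ∈ A, a ∈ F x := by
      simpa only [imageMV, Set.mem_iUnion, exists_prop] using ha
    have hb' : ∃ x ∈ A, b ∈ F x := by
      simpa only [imageMV, Set.mem_iUnion, exists_prop] using hb
    obtain ⟨x₁, hx₁, haF⟩ := ha'
    obtain ⟨x₂, hx₂, hbF⟩ := hb'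
    have memimg : ∀ z ∈ A, ∀ y ∈ F z, y ∈ imageMV F A := by
      intro z hz y hy
      simp only [imageMV, Set.mem_iUnion, exists_prop]
      exact ⟨z, hz, hy⟩
    have sub : ∀ z ∈ A, ∀ p ∈ F z, ∀ q ∈ F z,
        Relation.ReflTransGen
          (fun u v => adjY u v ∧ u ∈ imageMV F A ∧ v ∈ imageMV F A) p q := by
      intro z hz p hp q hq
      refine Relation.ReflTransGen.mono ?_ _ _ (hc z p hp q hq)
      rintro u v ⟨h1, h2, h3⟩
      exact ⟨h1, memimg z hz u h2, memimg z hz v h3⟩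
    have hpath := hA x₁ hx₁ x₂ hx₂
    have key : ∀ c, Relation.ReflTransGen
        (fun u v => adjX u v ∧ u ∈ A ∧ v ∈ A) x₁ c →
        c ∈ A → ∀ b' ∈ F c, Relation.ReflTransGen
          (fun u v => adjY u v ∧ u ∈ imageMV F A ∧ v ∈ imageMV F A) a b' := by
      intro c hcpath
      induction hcpath with
      | refl => intro _ b' hb'; exact sub x₁ hx₁ a haF b' hb'
      | @tail m c hp hstep ih =>
        intro hcA b' hb'
        obtain ⟨hadj, hmA, _⟩ := hstep
        obtain ⟨p, hpF, q, hqF, hpq⟩ := hw _ _ hadj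
        have t1 := ih hmA p hpF
        rcases hpq with rfl | hpq
        · exact t1.trans (sub c hcA p hqF b' hb')
        · have step : adjY p q ∧ p ∈ imageMV F A ∧ q ∈ imageMV F A :=
            ⟨hpq, memimg m hmA p hpF, memimg c hcA q hqF⟩
          exact (t1.tail step).trans (sub c hcA q hqF b' hb')
    exact key x₂ hpath hx₂ b hbF
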